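/- For every odd integer ℘ ≥ 5, the Toeplitz graph T_℘⟨{1, ℘−2}⟩ satisfies ldim_f(T_℘⟨{1, ℘−2}⟩) = 1. -/

import Mathlib

open Finset

def IsLocalResolvingFunction {V : Type*} [Fintype V] (G : SimpleGraph V) (ζ : V → ℝ) : Prop :=
  (∀ w, ζ w ∈ Set.Icc (0 : ℝ) 1) ∧
    ∀ u v, G.Adj u v →
      1 ≤ ∑ w ∈ Finset.univ.filter (fun w => G.dist w u ≠ G.dist w v), ζ w

noncomputable def ldimf {V : Type*} [Fintype V] (G : SimpleGraph V) : ℝ :=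
  sInf {s : ℝ | ∃ ζ : V → ℝ, IsLocalResolvingFunction G ζ ∧ s = ∑ v, ζ v}

def toeplitzGraph (n : ℕ) (S : Set ℕ) : SimpleGraph (Fin n) where
  Adj p q := p ≠ q ∧ Nat.dist (p : ℕ) (q : ℕ) ∈ S
  symm := ⟨fun p q ⟨h1, h2⟩ => ⟨h1.symm, by rwa [Nat.dist_comm]⟩⟩
  loopless := ⟨fun p ⟨h, _⟩ => h rfl⟩

section aux

private lemma adj_parity (p : ℕ) (hp : 5 ≤ p) (hodd : Odd p) {a b : Fin p}
    (h : (toeplitzGraph p {1, p - 2}).Adj a b) : ((a : ℕ) + b) % 2 = 1 := by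
  obtain ⟨hne, hd⟩ := h
  have hd2 : Nat.dist (a : ℕ) b = 1 ∨ Nat.dist (a : ℕ) b = p - 2 := hd
  obtain ⟨k, hk⟩ := hodd
  simp [Nat.dist] at hd2
  omega

private lemma walk_parity (p : ℕ) (hp : 5 ≤ p) (hodd : Odd p) {a b : Fin p}
    (w : (toeplitzGraph p {1, p - 2}).Walk a b) :
    (w.length + (a : ℕ) + b) % 2 = 0 := by
  induction w with
  | nil => simp only [SimpleGraph.Walk.length_nil]; omega
  | cons h q ih =>
    have := adj_parity p hp hodd h
    simp only [SimpleGraph.Walk.length_cons]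
    omega

private lemma reach (p : ℕ) (hp : 5 ≤ p) :
    ∀ k (hk : k < p), (toeplitzGraph p {1, p - 2}).Reachable ⟨k, hk⟩ ⟨0, by omega⟩ := by
  intro k
  induction k with
  | zero => intro hk; rfl
  | succ n ih =>
    intro hk
    have h1 : n < p := by omega
    have hadj : (toeplitzGraph p {1, p - 2}).Adj ⟨n + 1, hk⟩ ⟨n, h1⟩ := by
      refine ⟨?_, ?_⟩
      · intro h; simp [Fin.ext_iff] at h
      · left; simp [Nat.dist]
    exact hadj.reachable.trans (ih h1)

private lemma dist_parity (p : ℕ) (hp : 5 ≤ p) (hodd : Odd p) (w u : Fin p) :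
    ((toeplitzGraph p {1, p - 2}).dist w u + (w : ℕ) + u) % 2 = 0 := by
  have hr : (toeplitzGraph p {1, p - 2}).Reachable w u := by
    have h1 := reach p hp w.1 w.2
    have h2 := reach p hp u.1 u.2
    exact h1.trans h2.symm
  obtain ⟨q, hq⟩ := hr.exists_walk_length_eq_dist
  have := walk_parity p hp hodd q
  omega

private lemma resolve_all (p : ℕ) (hp : 5 ≤ p) (hodd : Odd p) {u v : Fin p}
    (h : (toeplitzGraph p {1, p - 2}).Adj u v) (w : Fin p) :
    (toeplitzGraph p {1, p - 2}).dist w u ≠ (toeplitzGraph p {1, p - 2}).dist w v := by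
  have h1 := dist_parity p hp hodd w u
  have h2 := dist_parity p hp hodd w v
  have h3 := adj_parity p hp hodd h
  omega

end aux

theorem ldimf_toeplitz_one_sub_two (p : ℕ) (hp : 5 ≤ p) (hodd : Odd p) :
    ldimf (toeplitzGraph p {1, p - 2}) = 1 := by
  set G := toeplitzGraph p {1, p - 2} with hG
  have hp0 : (0 : ℕ) < p := by omega
  have hpR : (0 : ℝ) < (p : ℝ) := by exact_mod_cast hp0
  have hpR1 : (1 : ℝ) ≤ (p : ℝ) := by exact_mod_cast by omega
  have hedge : G.Adj ⟨0, by omega⟩ ⟨1, by omega⟩ := by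
    refine ⟨?_, ?_⟩
    · intro h; simp [Fin.ext_iff] at h
    · left; simp [Nat.dist]
  -- membership of 1 in the set
  have hmem : (1 : ℝ) ∈ {s : ℝ | ∃ ζ : Fin p → ℝ, IsLocalResolvingFunction G ζ ∧ s = ∑ v, ζ v} := by
    refine ⟨fun _ => 1 / p, ⟨?_, ?_⟩, ?_⟩
    · intro w
      constructor
      · positivity
      · rw [div_le_one hpR]; exact hpR1
    · intro u v huv
      have hfil : Finset.univ.filter (fun w => G.dist w u ≠ G.dist w v) = Finset.univ := by
        apply Finset.filter_true_of_mem
        intro w _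
        exact resolve_all p hp hodd huv w
      rw [hfil, Finset.sum_const, Finset.card_univ, Fintype.card_fin, nsmul_eq_mul]
      rw [mul_one_div, div_self hpR.ne']
    · rw [Finset.sum_const, Finset.card_univ, Fintype.card_fin, nsmul_eq_mul,
        mul_one_div, div_self hpR.ne']
  -- lower bound
  have hlb : ∀ s ∈ {s : ℝ | ∃ ζ : Fin p → ℝ, IsLocalResolvingFunction G ζ ∧ s = ∑ v, ζ v},
      (1 : ℝ) ≤ s := by
    rintro s ⟨ζ, ⟨hζ01, hζr⟩, rfl⟩
    have h1 := hζr _ _ hedge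
    refine h1.trans ?_
    exact Finset.sum_le_sum_of_subset_of_nonneg (Finset.filter_subset _ _)
      (fun w _ _ => (hζ01 w).1)
  exact le_antisymm (csInf_le ⟨1, hlb⟩ hmem) (le_csInf ⟨1, hmem⟩ hlb)
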